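/- arXiv:2007.06117 — 2 statements merged into one kernel-verified Lean document; each statement's English description precedes it below -/
import Mathlib

section
/- Suppose 0 ≤ Δ < K and Θ : [0,∞) → ℝ solves Θ' = Δ − K sin(Θ) with initial value Θ(0) ∈ (arcsin(Δ/K) − ε, arcsin(Δ/K) + ε) for sufficiently small ε > 0 (specifically, with Θ(0) in the open interval (−π − arcsin(Δ/K), π − arcsin(Δ/K))). Then Θ(t) → arcsin(Δ/K) as t → ∞. -/
open Real Filter

private lemma sin_le_max' {a θ b : ℝ} (ha : -(3 * π / 2) ≤ a) (h1 : a ≤ θ) (h2 : θ ≤ b)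
    (hb : b ≤ π / 2) : Real.sin θ ≤ max (Real.sin a) (Real.sin b) := by
  rcases le_or_gt (-(π / 2)) θ with hθ | hθ
  · exact le_max_of_le_right
      (Real.strictMonoOn_sin.monotoneOn ⟨hθ, h2.trans hb⟩ ⟨hθ.trans h2, hb⟩ h2)
  · have e : ∀ x : ℝ, Real.sin (-π - x) = Real.sin x := by
      intro x
      rw [show (-π - x) = -(π + x) by ring, Real.sin_neg, Real.sin_add]
      simp
    have hπ := Real.pi_pos
    have m : Real.sin (-π - θ) ≤ Real.sin (-π - a) := by
      apply Real.strictMonoOn_sin.monotoneOn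
      · constructor <;> linarith
      · constructor <;> linarith
      · linarith
    rw [e θ, e a] at m
    exact le_max_of_le_left m

private lemma sin_lt_max' {a θ b : ℝ} (ha : -(3 * π / 2) ≤ a) (h1 : a < θ) (h2 : θ < b)
    (hb : b ≤ π / 2) : Real.sin θ < max (Real.sin a) (Real.sin b) := by
  rcases le_or_gt (-(π / 2)) θ with hθ | hθ
  · exact lt_max_of_lt_right
      (Real.strictMonoOn_sin ⟨hθ, h2.le.trans hb⟩ ⟨hθ.trans h2.le, hb⟩ h2)
  · have e : ∀ x : ℝ, Real.sin (-π - x) = Real.sin x := by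
      intro x
      rw [show (-π - x) = -(π + x) by ring, Real.sin_neg, Real.sin_add]
      simp
    have hπ := Real.pi_pos
    have m : Real.sin (-π - θ) < Real.sin (-π - a) := by
      apply Real.strictMonoOn_sin
      · constructor <;> linarith
      · constructor <;> linarith
      · linarith
    rw [e θ, e a] at m
    exact lt_max_of_lt_left m

private lemma min_le_sin' {a θ b : ℝ} (ha : -(π / 2) ≤ a) (h1 : a ≤ θ) (h2 : θ ≤ b)
    (hb : b ≤ 3 * π / 2) : min (Real.sin a) (Real.sin b) ≤ Real.sin θ := by
  have h := sin_le_max' (a := -b) (θ := -θ) (b := -a) (by linarith) (by linarith) (by linarith)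
    (by linarith)
  rw [Real.sin_neg, Real.sin_neg, Real.sin_neg] at h
  rcases le_max_iff.mp h with h' | h'
  · exact le_trans (min_le_right _ _) (by linarith)
  · exact le_trans (min_le_left _ _) (by linarith)

private lemma min_lt_sin' {a θ b : ℝ} (ha : -(π / 2) ≤ a) (h1 : a < θ) (h2 : θ < b)
    (hb : b ≤ 3 * π / 2) : min (Real.sin a) (Real.sin b) < Real.sin θ := by
  have h := sin_lt_max' (a := -b) (θ := -θ) (b := -a) (by linarith) (by linarith) (by linarith)
    (by linarith)
  rw [Real.sin_neg, Real.sin_neg, Real.sin_neg] at h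
  rcases lt_max_iff.mp h with h' | h'
  · exact lt_of_le_of_lt (min_le_right _ _) (by linarith)
  · exact lt_of_le_of_lt (min_le_left _ _) (by linarith)

private lemma decay' {f g : ℝ → ℝ} {T c : ℝ} (hf : ∀ t ≥ T, HasDerivAt f (g t) t)
    (hb : ∀ t ≥ T, g t ≤ -c) {t : ℝ} (ht : T ≤ t) : f t + c * t ≤ f T + c * T := by
  have hca : ∀ s : ℝ, HasDerivAt (fun y : ℝ => c * y) c s := fun s => by
    simpa using (hasDerivAt_id s).const_mul c
  have hA : AntitoneOn (fun s => f s + c * s) (Set.Ici T) := by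
    apply antitoneOn_of_deriv_nonpos (convex_Ici T)
    · exact fun s hs => ((hf s hs).add (hca s)).continuousAt.continuousWithinAt
    · intro s hs
      rw [interior_Ici] at hs
      exact ((hf s (le_of_lt hs)).add (hca s)).differentiableAt.differentiableWithinAt
    · intro s hs
      rw [interior_Ici] at hs
      rw [show deriv (fun s => f s + c * s) s = g s + c from ((hf s (le_of_lt hs)).add (hca s)).deriv]
      have := hb s (le_of_lt hs)
      linarith
  exact hA Set.self_mem_Ici ht ht

private lemma sin_lip : LipschitzWith 1 Real.sin := by
  apply lipschitzWith_of_nnnorm_deriv_le Real.differentiable_sin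
  intro x
  rw [Real.deriv_sin, ← NNReal.coe_le_coe, coe_nnnorm, Real.norm_eq_abs]
  simpa using Real.abs_cos_le_one x

private lemma vlip (K Δ : ℝ) (hK : 0 < K) (t : ℝ) :
    LipschitzWith ⟨K, hK.le⟩ (fun x => Δ - K * Real.sin x) := by
  apply LipschitzWith.of_dist_le_mul
  intro x y
  have h1 : dist (Real.sin x) (Real.sin y) ≤ dist x y := by
    simpa using sin_lip.dist_le_mul x y
  have e : (Δ - K * Real.sin x) - (Δ - K * Real.sin y) = K * (Real.sin y - Real.sin x) := by ring
  rw [Real.dist_eq, e, abs_mul, abs_of_nonneg hK.le]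
  rw [Real.dist_eq, Real.dist_eq] at h1
  have h2 : |Real.sin y - Real.sin x| ≤ |x - y| := by
    rw [abs_sub_comm] at h1; exact h1
  calc K * |Real.sin y - Real.sin x| ≤ K * |x - y| := mul_le_mul_of_nonneg_left h2 hK.le
    _ = (⟨K, hK.le⟩ : NNReal) * dist x y := by rw [Real.dist_eq]

private lemma fwd_eq (K Δ : ℝ) (hK : 0 < K) (Θ : ℝ → ℝ)
    (hode : ∀ t ≥ 0, HasDerivAt Θ (Δ - K * Real.sin (Θ t)) t)
    {a b y : ℝ} (ha : 0 ≤ a) (hab : a ≤ b) (heq : Θ a = y)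
    (hy : Real.sin y = Δ / K) : Θ b = y := by
  have hKne : K ≠ 0 := ne_of_gt hK
  have hy0 : Δ - K * Real.sin y = 0 := by rw [hy]; field_simp; ring
  have key := ODE_solution_unique (v := fun _ x => Δ - K * Real.sin x)
    (f := Θ) (g := fun _ => y) (a := a) (b := b)
    (fun t => vlip K Δ hK t)
    (fun t ht => (hode t (ha.trans ht.1)).continuousAt.continuousWithinAt)
    (fun t ht => (hode t (ha.trans ht.1)).hasDerivWithinAt)
    continuousOn_const
    (fun t _ => by simpa only [hy0] using hasDerivWithinAt_const t (Set.Ici t) y)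
    heq
  exact key (Set.right_mem_Icc.2 hab)

private lemma bwd_eq (K Δ : ℝ) (hK : 0 < K) (Θ : ℝ → ℝ)
    (hode : ∀ t ≥ 0, HasDerivAt Θ (Δ - K * Real.sin (Θ t)) t)
    {a b y : ℝ} (ha : 0 ≤ a) (hab : a ≤ b) (heq : Θ b = y)
    (hy : Real.sin y = Δ / K) : Θ a = y := by
  have hKne : K ≠ 0 := ne_of_gt hK
  have hy0 : Δ - K * Real.sin y = 0 := by rw [hy]; field_simp; ring
  have key := ODE_solution_unique_of_mem_Icc_left (v := fun _ x => Δ - K * Real.sin x)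
    (s := fun _ => (Set.univ : Set ℝ))
    (f := Θ) (g := fun _ => y) (a := a) (b := b)
    (fun t _ => (vlip K Δ hK t).lipschitzOnWith)
    (fun t ht => (hode t (ha.trans ht.1)).continuousAt.continuousWithinAt)
    (fun t ht => (hode t (ha.trans ht.1.le)).hasDerivWithinAt)
    (fun _ _ => Set.mem_univ _)
    continuousOn_const
    (fun t _ => by simpa only [hy0] using hasDerivWithinAt_const t (Set.Iic t) y)
    (fun _ _ => Set.mem_univ _)
    heq
  exact key (Set.left_mem_Icc.2 hab)

set_option maxHeartbeats 1000000 in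
theorem stmt5 (K Δ : ℝ) (hK : 0 < K) (h0 : 0 ≤ Δ) (h1 : Δ < K) (Θ : ℝ → ℝ)
    (hode : ∀ t ≥ 0, HasDerivAt Θ (Δ - K * Real.sin (Θ t)) t)
    (hinit : Θ 0 ∈ Set.Ioo (-π - Real.arcsin (Δ / K)) (π - Real.arcsin (Δ / K))) :
    Tendsto Θ atTop (nhds (Real.arcsin (Δ / K))) := by
  have hKne : K ≠ 0 := ne_of_gt hK
  set θs := Real.arcsin (Δ / K) with hθsdef
  have hπ := Real.pi_pos
  have hr0 : 0 ≤ Δ / K := div_nonneg h0 hK.le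
  have hr1 : Δ / K < 1 := (div_lt_one hK).2 h1
  have hθ0 : 0 ≤ θs := Real.arcsin_nonneg.2 hr0
  have hθhalf : θs < π / 2 := Real.arcsin_lt_pi_div_two.2 hr1
  have hsθ : Real.sin θs = Δ / K := Real.sin_arcsin (by linarith) hr1.le
  have hsθ2 : Real.sin (π - θs) = Δ / K := by rw [Real.sin_pi_sub]; exact hsθ
  have hsθ3 : Real.sin (-π - θs) = Δ / K := by
    rw [show (-π - θs) = -(π + θs) by ring, Real.sin_neg, Real.sin_add]
    simpa using hsθ
  have hKΔ : K * (Δ / K) = Δ := by field_simp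
  have hcont : ∀ {a b : ℝ}, 0 ≤ a → ContinuousOn Θ (Set.Icc a b) := fun {a b} ha =>
    fun t ht => (hode t (ha.trans ht.1)).continuousAt.continuousWithinAt
  rcases lt_trichotomy (Θ 0) θs with hlt | heq0 | hgt
  · -- Θ 0 < θs : solution increases to θs
    have hub : ∀ t ≥ 0, Θ t ≤ θs := by
      intro t ht
      by_contra hcon
      push_neg at hcon
      obtain ⟨t0, ht0, ht0e⟩ :=
        intermediate_value_Icc ht (hcont le_rfl) (Set.mem_Icc.2 ⟨hlt.le, hcon.le⟩)
      have := fwd_eq K Δ hK Θ hode ht0.1 ht0.2 ht0e hsθ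
      linarith
    have hlb : ∀ t ≥ 0, -π - θs < Θ t := by
      intro t ht
      by_contra hcon
      push_neg at hcon
      obtain ⟨t0, ht0, ht0e⟩ :=
        intermediate_value_Icc' ht (hcont le_rfl) (Set.mem_Icc.2 ⟨hcon, hinit.1.le⟩)
      have := bwd_eq K Δ hK Θ hode le_rfl ht0.1 ht0e hsθ3
      linarith [hinit.1]
    have hderle : ∀ s ≥ 0, Real.sin (Θ s) ≤ Δ / K := by
      intro s hs
      have h := sin_le_max' (a := -π - θs) (θ := Θ s) (b := θs)
        (by linarith) (hlb s hs).le (hub s hs) (by linarith)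
      rwa [hsθ3, hsθ, max_self] at h
    have hmono : ∀ T ≥ 0, ∀ t ≥ T, Θ T ≤ Θ t := by
      intro T hT t ht
      have h := decay' (f := fun s => -Θ s) (g := fun s => -(Δ - K * Real.sin (Θ s))) (c := 0)
        (fun s hs => (hode s (hT.trans hs)).neg)
        (fun s hs => by
          have h2 := hderle s (hT.trans hs)
          have h3 : K * Real.sin (Θ s) ≤ Δ := by
            have := mul_le_mul_of_nonneg_left h2 hK.le
            rwa [hKΔ] at this
          simp only [neg_zero]
          linarith) ht
      simp only [zero_mul, add_zero] at h
      linarith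
    set S := Θ '' Set.Ici 0 with hS
    have hmemS : ∀ t ≥ 0, Θ t ∈ S := fun t ht => ⟨t, ht, rfl⟩
    have hSne : S.Nonempty := ⟨Θ 0, hmemS 0 le_rfl⟩
    have hbdd : BddAbove S := ⟨θs, by rintro x ⟨t, ht, rfl⟩; exact hub t ht⟩
    set L := sSup S with hL
    have hLle : L ≤ θs := csSup_le hSne (by rintro x ⟨t, ht, rfl⟩; exact hub t ht)
    have hL0 : Θ 0 ≤ L := le_csSup hbdd (hmemS 0 le_rfl)
    have htend : Tendsto Θ atTop (nhds L) := by
      rw [tendsto_order]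
      constructor
      · intro a hax
        obtain ⟨x, hxS, hax2⟩ := exists_lt_of_lt_csSup hSne hax
        obtain ⟨T, hT, rfl⟩ := hxS
        filter_upwards [eventually_ge_atTop T] with t ht
        exact lt_of_lt_of_le hax2 (hmono T hT t ht)
      · intro a hax
        filter_upwards [eventually_ge_atTop (0 : ℝ)] with t ht
        exact lt_of_le_of_lt (le_csSup hbdd (hmemS t ht)) hax
    have hLeq : L = θs := by
      by_contra hne
      have hLlt : L < θs := lt_of_le_of_ne hLle hne
      set c := Δ - K * max (Real.sin (Θ 0)) (Real.sin L) with hc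
      have hs1 : Real.sin (Θ 0) < Δ / K := by
        have h := sin_lt_max' (a := -π - θs) (θ := Θ 0) (b := θs) (by linarith) hinit.1 hlt
          (by linarith)
        rwa [hsθ3, hsθ, max_self] at h
      have hs2 : Real.sin L < Δ / K := by
        have h := sin_lt_max' (a := -π - θs) (θ := L) (b := θs) (by linarith)
          (lt_of_lt_of_le (hlb 0 le_rfl) hL0) hLlt (by linarith)
        rwa [hsθ3, hsθ, max_self] at h
      have hmaxlt : max (Real.sin (Θ 0)) (Real.sin L) < Δ / K := max_lt hs1 hs2
      have hcpos : 0 < c := by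
        have : K * max (Real.sin (Θ 0)) (Real.sin L) < K * (Δ / K) :=
          mul_lt_mul_of_pos_left hmaxlt hK
        rw [hKΔ] at this
        simp only [hc]
        linarith
      have hdb : ∀ t ≥ 0, -(Δ - K * Real.sin (Θ t)) ≤ -c := by
        intro t ht
        have h2 : Θ t ≤ L := le_csSup hbdd (hmemS t ht)
        have h3 : Real.sin (Θ t) ≤ max (Real.sin (Θ 0)) (Real.sin L) := by
          apply sin_le_max' _ (hmono 0 le_rfl t ht) h2 (by linarith)
          have := hinit.1
          linarith
        have : K * Real.sin (Θ t) ≤ K * max (Real.sin (Θ 0)) (Real.sin L) :=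
          mul_le_mul_of_nonneg_left h3 hK.le
        simp only [hc]
        linarith
      set t1 := max 0 ((θs - Θ 0) / c + 1) with ht1def
      have ht1 : (0 : ℝ) ≤ t1 := le_max_left _ _
      have h2 := decay' (f := fun s => -Θ s) (g := fun s => -(Δ - K * Real.sin (Θ s))) (c := c)
        (fun s hs => (hode s hs).neg) hdb ht1
      have h3 : Θ t1 ≤ θs := hub t1 ht1
      have h4 : (θs - Θ 0) / c + 1 ≤ t1 := le_max_right _ _
      have h5 : θs - Θ 0 < c * t1 := by
        have h6 : c * ((θs - Θ 0) / c + 1) = (θs - Θ 0) + c := by field_simp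
        have h7 := mul_le_mul_of_nonneg_left h4 hcpos.le
        rw [h6] at h7
        linarith
      simp only [mul_zero, add_zero] at h2
      linarith
    rw [← hLeq]
    exact htend
  · -- Θ 0 = θs : constant
    have hconst : ∀ t ≥ 0, Θ t = θs := fun t ht => fwd_eq K Δ hK Θ hode le_rfl ht heq0 hsθ
    apply Tendsto.congr' _ tendsto_const_nhds
    filter_upwards [eventually_ge_atTop (0 : ℝ)] with t ht
    exact (hconst t ht).symm
  · -- θs < Θ 0 : solution decreases to θs
    have hlb : ∀ t ≥ 0, θs ≤ Θ t := by
      intro t ht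
      by_contra hcon
      push_neg at hcon
      obtain ⟨t0, ht0, ht0e⟩ :=
        intermediate_value_Icc' ht (hcont le_rfl) (Set.mem_Icc.2 ⟨hcon.le, hgt.le⟩)
      have := fwd_eq K Δ hK Θ hode ht0.1 ht0.2 ht0e hsθ
      linarith
    have hub : ∀ t ≥ 0, Θ t < π - θs := by
      intro t ht
      by_contra hcon
      push_neg at hcon
      obtain ⟨t0, ht0, ht0e⟩ :=
        intermediate_value_Icc ht (hcont le_rfl) (Set.mem_Icc.2 ⟨hinit.2.le, hcon⟩)
      have := bwd_eq K Δ hK Θ hode le_rfl ht0.1 ht0e hsθ2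
      linarith [hinit.2]
    have hderge : ∀ s ≥ 0, Δ / K ≤ Real.sin (Θ s) := by
      intro s hs
      have h := min_le_sin' (a := θs) (θ := Θ s) (b := π - θs)
        (by linarith) (hlb s hs) (hub s hs).le (by linarith)
      rwa [hsθ, hsθ2, min_self] at h
    have hmono : ∀ T ≥ 0, ∀ t ≥ T, Θ t ≤ Θ T := by
      intro T hT t ht
      have h := decay' (f := Θ) (g := fun s => Δ - K * Real.sin (Θ s)) (c := 0)
        (fun s hs => hode s (hT.trans hs))
        (fun s hs => by
          have h2 := hderge s (hT.trans hs)
          have h3 : Δ ≤ K * Real.sin (Θ s) := by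
            have := mul_le_mul_of_nonneg_left h2 hK.le
            rwa [hKΔ] at this
          simp only [neg_zero]
          linarith) ht
      simp only [zero_mul, add_zero] at h
      linarith
    set S := Θ '' Set.Ici 0 with hS
    have hmemS : ∀ t ≥ 0, Θ t ∈ S := fun t ht => ⟨t, ht, rfl⟩
    have hSne : S.Nonempty := ⟨Θ 0, hmemS 0 le_rfl⟩
    have hbdd : BddBelow S := ⟨θs, by rintro x ⟨t, ht, rfl⟩; exact hlb t ht⟩
    set L := sInf S with hL
    have hLge : θs ≤ L := le_csInf hSne (by rintro x ⟨t, ht, rfl⟩; exact hlb t ht)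
    have hL0 : L ≤ Θ 0 := csInf_le hbdd (hmemS 0 le_rfl)
    have htend : Tendsto Θ atTop (nhds L) := by
      rw [tendsto_order]
      constructor
      · intro a hax
        filter_upwards [eventually_ge_atTop (0 : ℝ)] with t ht
        exact lt_of_lt_of_le hax (csInf_le hbdd (hmemS t ht))
      · intro a hax
        obtain ⟨x, hxS, hax2⟩ := exists_lt_of_csInf_lt hSne hax
        obtain ⟨T, hT, rfl⟩ := hxS
        filter_upwards [eventually_ge_atTop T] with t ht
        exact lt_of_le_of_lt (hmono T hT t ht) hax2
    have hLeq : L = θs := by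
      by_contra hne
      have hLgt : θs < L := lt_of_le_of_ne hLge (Ne.symm hne)
      set c := K * min (Real.sin (Θ 0)) (Real.sin L) - Δ with hc
      have hs1 : Δ / K < Real.sin (Θ 0) := by
        have h := min_lt_sin' (a := θs) (θ := Θ 0) (b := π - θs) (by linarith) hgt hinit.2
          (by linarith)
        rwa [hsθ, hsθ2, min_self] at h
      have hs2 : Δ / K < Real.sin L := by
        have h := min_lt_sin' (a := θs) (θ := L) (b := π - θs) (by linarith) hLgt
          (lt_of_le_of_lt hL0 (hub 0 le_rfl)) (by linarith)
        rwa [hsθ, hsθ2, min_self] at h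
      have hminlt : Δ / K < min (Real.sin (Θ 0)) (Real.sin L) := lt_min hs1 hs2
      have hcpos : 0 < c := by
        have : K * (Δ / K) < K * min (Real.sin (Θ 0)) (Real.sin L) :=
          mul_lt_mul_of_pos_left hminlt hK
        rw [hKΔ] at this
        simp only [hc]
        linarith
      have hdb : ∀ t ≥ 0, Δ - K * Real.sin (Θ t) ≤ -c := by
        intro t ht
        have h2 : L ≤ Θ t := csInf_le hbdd (hmemS t ht)
        have h3 : min (Real.sin L) (Real.sin (Θ 0)) ≤ Real.sin (Θ t) := by
          apply min_le_sin' (by linarith) h2 (hmono 0 le_rfl t ht)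
          have := hub 0 le_rfl
          linarith
        have h4 : min (Real.sin (Θ 0)) (Real.sin L) ≤ Real.sin (Θ t) := by
          rw [min_comm] at h3; exact h3
        have : K * min (Real.sin (Θ 0)) (Real.sin L) ≤ K * Real.sin (Θ t) :=
          mul_le_mul_of_nonneg_left h4 hK.le
        simp only [hc]
        linarith
      set t1 := max 0 ((Θ 0 - θs) / c + 1) with ht1def
      have ht1 : (0 : ℝ) ≤ t1 := le_max_left _ _
      have h2 := decay' (f := Θ) (g := fun s => Δ - K * Real.sin (Θ s)) (c := c)
        (fun s hs => hode s hs) hdb ht1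
      have h3 : θs ≤ Θ t1 := hlb t1 ht1
      have h4 : (Θ 0 - θs) / c + 1 ≤ t1 := le_max_right _ _
      have h5 : Θ 0 - θs < c * t1 := by
        have h6 : c * ((Θ 0 - θs) / c + 1) = (Θ 0 - θs) + c := by field_simp
        have h7 := mul_le_mul_of_nonneg_left h4 hcpos.le
        rw [h6] at h7
        linarith
      simp only [mul_zero, add_zero] at h2
      linarith
    rw [← hLeq]
    exact htend
end

section
/- Theorem 1 (synchronization dichotomy): For the two-oscillator Kuramoto model θ₁' = ω₁ + (K/2)sin(θ₂ − θ₁), θ₂' = ω₂ + (K/2)sin(θ₁ − θ₂) with K > 0, every solution satisfies |θ₁'(t) − θ₂'(t)| → 0 as t → ∞ if and only if |ω₁ − ω₂| ≤ K. -/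
open Real Filter Set

private lemma kuraLip (a K : ℝ) (hK : 0 < K) :
    LipschitzWith K.toNNReal (fun x : ℝ => a - K * Real.sin x) := by
  apply LipschitzWith.of_dist_le_mul
  intro x y
  rw [Real.dist_eq, Real.dist_eq]
  have h1 : (a - K * Real.sin x) - (a - K * Real.sin y)
      = -(K * (Real.sin x - Real.sin y)) := by ring
  rw [h1, abs_neg, abs_mul, abs_of_pos hK]
  have h2 : |Real.sin x - Real.sin y| ≤ |x - y| := by
    rw [Real.sin_sub_sin]
    have hs : |Real.sin ((x - y) / 2)| ≤ |(x - y) / 2| := Real.abs_sin_le_abs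
    have hc : |Real.cos ((x + y) / 2)| ≤ 1 := Real.abs_cos_le_one _
    have h3 : |2 * Real.sin ((x - y) / 2) * Real.cos ((x + y) / 2)|
        = 2 * |Real.sin ((x - y) / 2)| * |Real.cos ((x + y) / 2)| := by
      rw [abs_mul, abs_mul, abs_two]
    rw [h3]
    have h4 : |(x - y) / 2| = |x - y| / 2 := by rw [abs_div, abs_two]
    nlinarith [abs_nonneg (Real.sin ((x - y) / 2)), abs_nonneg (Real.cos ((x + y) / 2)),
      abs_nonneg (x - y)]
  have h3 : (K.toNNReal : ℝ) = K := Real.coe_toNNReal K hK.le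
  rw [h3]
  exact mul_le_mul_of_nonneg_left h2 hK.le

/-- If the vector field vanishes at some time `t₀ ≥ 0`, the solution stays constant. -/
private lemma constFuture {a K : ℝ} (hK : 0 < K) {φ : ℝ → ℝ}
    (hφ : ∀ t ≥ 0, HasDerivAt φ (a - K * Real.sin (φ t)) t)
    {t₀ : ℝ} (ht₀ : 0 ≤ t₀) (hz : a - K * Real.sin (φ t₀) = 0) :
    ∀ t ≥ t₀, φ t = φ t₀ := by
  intro t ht
  have key := ODE_solution_unique (v := fun _ x => a - K * Real.sin x)
    (K := K.toNNReal) (f := φ) (g := fun _ => φ t₀) (a := t₀) (b := t)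
    (fun _ => kuraLip a K hK)
    (fun s hs => ((hφ s (ht₀.trans hs.1)).continuousAt).continuousWithinAt)
    (fun s hs => ((hφ s (ht₀.trans hs.1)).hasDerivWithinAt))
    continuousOn_const
    (fun s _ => by
      simpa [hz] using (hasDerivAt_const s (φ t₀)).hasDerivWithinAt (s := Ici s))
    rfl
  exact key ⟨ht, le_rfl⟩

private lemma signDichotomy {a K : ℝ} (hK : 0 < K) {φ : ℝ → ℝ}
    (hφ : ∀ t ≥ 0, HasDerivAt φ (a - K * Real.sin (φ t)) t) :
    (∀ t ≥ 0, 0 ≤ a - K * Real.sin (φ t)) ∨ (∀ t ≥ 0, a - K * Real.sin (φ t) ≤ 0) := by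
  by_contra hcon
  push_neg at hcon
  obtain ⟨⟨t₁, ht₁, h1⟩, ⟨t₂, ht₂, h2⟩⟩ := hcon
  set g : ℝ → ℝ := fun t => a - K * Real.sin (φ t) with hg
  have hcont : ContinuousOn g (uIcc t₁ t₂) := by
    intro s hs
    have hs0 : (0:ℝ) ≤ s := le_trans (le_min ht₁ ht₂) hs.1
    exact (continuousAt_const.sub
      (continuousAt_const.mul (Real.continuous_sin.continuousAt.comp
        (hφ s hs0).continuousAt))).continuousWithinAt
  have hmem : (0:ℝ) ∈ uIcc (g t₁) (g t₂) := by
    rw [Set.mem_uIcc]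
    left; exact ⟨h1.le, h2.le⟩
  obtain ⟨ts, hts, hzero⟩ := intermediate_value_uIcc hcont hmem
  have hts0 : (0:ℝ) ≤ ts := le_trans (le_min ht₁ ht₂) hts.1
  have hzero' : a - K * Real.sin (φ ts) = 0 := hzero
  have hconst := constFuture hK hφ hts0 hzero'
  rcases le_total t₁ t₂ with hle | hle
  · have heq : φ t₂ = φ ts := hconst t₂ (hts.2.trans (by rw [max_eq_right hle]))
    rw [heq] at h2
    linarith
  · have heq : φ t₁ = φ ts := hconst t₁ (hts.2.trans (by rw [max_eq_left hle]))
    rw [heq] at h1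
    linarith

private lemma convNonneg {a K : ℝ} (hK : 0 < K) (ha : |a| ≤ K) {φ : ℝ → ℝ}
    (hφ : ∀ t ≥ 0, HasDerivAt φ (a - K * Real.sin (φ t)) t)
    (hpos : ∀ t ≥ 0, 0 ≤ a - K * Real.sin (φ t)) :
    Tendsto (fun t => a - K * Real.sin (φ t)) atTop (nhds 0) := by
  have habs := abs_le.1 ha
  -- φ is monotone on [0, ∞)
  have hmono : MonotoneOn φ (Ici 0) := by
    apply monotoneOn_of_deriv_nonneg (convex_Ici 0)
    · exact fun s hs => (hφ s hs).continuousAt.continuousWithinAt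
    · intro s hs
      rw [interior_Ici] at hs
      exact (hφ s hs.le).differentiableAt.differentiableWithinAt
    · intro s hs
      rw [interior_Ici] at hs
      rw [(hφ s hs.le).deriv]
      exact hpos s hs.le
  -- an equilibrium above φ 0
  have haK : |a / K| ≤ 1 := by
    rw [abs_div, abs_of_pos hK, div_le_one hK]
    exact ha
  have haK' := abs_le.1 haK
  obtain ⟨n, hn⟩ := exists_nat_ge ((φ 0 - Real.arcsin (a / K)) / (2 * π))
  set z : ℝ := Real.arcsin (a / K) + n * (2 * π) with hzdef
  have hsinz : Real.sin z = a / K := by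
    rw [hzdef, Real.sin_add_nat_mul_two_pi, Real.sin_arcsin haK'.1 haK'.2]
  have hz0 : a - K * Real.sin z = 0 := by
    rw [hsinz]; field_simp; ring
  have hφ0z : φ 0 ≤ z := by
    have h2pi := Real.two_pi_pos
    rw [div_le_iff₀ h2pi] at hn
    rw [hzdef]; linarith
  -- φ t ≤ z for all t ≥ 0
  have hub : ∀ t ≥ 0, φ t ≤ z := by
    intro t ht
    by_contra hgt
    push_neg at hgt
    have hcont : ContinuousOn φ (Icc 0 t) :=
      fun s hs => (hφ s hs.1).continuousAt.continuousWithinAt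
    have : z ∈ Icc (φ 0) (φ t) := ⟨hφ0z, hgt.le⟩
    obtain ⟨ts, hts, hφts⟩ := intermediate_value_Icc ht hcont this
    have hzero : a - K * Real.sin (φ ts) = 0 := by rw [hφts]; exact hz0
    have := constFuture hK hφ hts.1 hzero t hts.2
    rw [this, hφts] at hgt
    exact lt_irrefl z hgt
  -- φ converges
  set ψ : ℝ → ℝ := fun t => φ (max t 0) with hψdef
  have hψmono : Monotone ψ := fun s t hst =>
    hmono (le_max_right s 0) (le_max_right t 0) (max_le_max hst le_rfl)
  have hψbdd : BddAbove (range ψ) :=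
    ⟨z, by rintro _ ⟨t, rfl⟩; exact hub _ (le_max_right t 0)⟩
  have hψlim : Tendsto ψ atTop (nhds (⨆ t, ψ t)) := tendsto_atTop_ciSup hψmono hψbdd
  set L := ⨆ t, ψ t with hL
  have hφlim : Tendsto φ atTop (nhds L) := by
    apply hψlim.congr'
    filter_upwards [eventually_ge_atTop (0:ℝ)] with t ht
    rw [hψdef]; simp only; rw [max_eq_left ht]
  -- the derivative converges to c := a - K sin L
  have hg : Tendsto (fun t => a - K * Real.sin (φ t)) atTop (nhds (a - K * Real.sin L)) :=
    tendsto_const_nhds.sub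
      (tendsto_const_nhds.mul ((Real.continuous_sin.tendsto L).comp hφlim))
  set c := a - K * Real.sin L with hc
  have hc0 : 0 ≤ c := ge_of_tendsto hg (by
    filter_upwards [eventually_ge_atTop (0:ℝ)] with t ht using hpos t ht)
  -- c must be 0
  rcases eq_or_lt_of_le hc0 with hceq | hcpos
  · rw [← hceq] at hg; exact hg
  exfalso
  have hev : ∀ᶠ t in atTop, c / 2 < a - K * Real.sin (φ t) :=
    hg.eventually (eventually_gt_nhds (half_lt_self hcpos))
  obtain ⟨T, hT⟩ := (eventually_atTop.mp (hev.and (eventually_ge_atTop (0:ℝ))))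
  have hT0 : (0:ℝ) ≤ T := (hT T le_rfl).2
  -- the auxiliary function t ↦ φ t - (c/2) * t is monotone on [T, ∞)
  have hauxd : ∀ t ≥ T, HasDerivAt (fun s => φ s - c / 2 * s)
      ((a - K * Real.sin (φ t)) - c / 2) t := by
    intro t ht
    exact (hφ t (hT0.trans ht)).sub (((hasDerivAt_id t).const_mul (c / 2)).congr_deriv
      (by simp))
  have hauxmono : MonotoneOn (fun s => φ s - c / 2 * s) (Ici T) := by
    apply monotoneOn_of_deriv_nonneg (convex_Ici T)
    · exact fun s hs => (hauxd s hs).continuousAt.continuousWithinAt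
    · intro s hs
      rw [interior_Ici] at hs
      exact (hauxd s hs.le).differentiableAt.differentiableWithinAt
    · intro s hs
      rw [interior_Ici] at hs
      rw [(hauxd s hs.le).deriv]
      have := (hT s hs.le).1
      linarith
  -- pick a large time where φ exceeds z
  set t₁ : ℝ := max T (T + (z + 1 - φ T) * 2 / c) with ht₁def
  have ht₁T : T ≤ t₁ := le_max_left _ _
  have hkey : φ T - c / 2 * T ≤ φ t₁ - c / 2 * t₁ :=
    hauxmono (self_mem_Ici) (mem_Ici.mpr ht₁T) ht₁T
  have ht₁big : T + (z + 1 - φ T) * 2 / c ≤ t₁ := le_max_right _ _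
  have hc2 : 0 < c / 2 := by linarith
  have : z + 1 - φ T ≤ c / 2 * (t₁ - T) := by
    have h5 : (z + 1 - φ T) * 2 / c ≤ t₁ - T := by linarith
    calc z + 1 - φ T = c / 2 * ((z + 1 - φ T) * 2 / c) := by field_simp
      _ ≤ c / 2 * (t₁ - T) := by exact mul_le_mul_of_nonneg_left h5 hc2.le
  have hexp : c / 2 * (t₁ - T) = c / 2 * t₁ - c / 2 * T := by ring
  have hφt₁ : z + 1 ≤ φ t₁ := by
    clear_value z ψ t₁ c L
    linarith only [hkey, this, hexp]
  have := hub t₁ (hT0.trans ht₁T)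
  clear_value z ψ t₁ c L
  linarith

private lemma mainConv {a K : ℝ} (hK : 0 < K) (ha : |a| ≤ K) {φ : ℝ → ℝ}
    (hφ : ∀ t ≥ 0, HasDerivAt φ (a - K * Real.sin (φ t)) t) :
    Tendsto (fun t => a - K * Real.sin (φ t)) atTop (nhds 0) := by
  rcases signDichotomy hK hφ with h | h
  · exact convNonneg hK ha hφ h
  · have hφ' : ∀ t ≥ 0, HasDerivAt (fun s => -φ s) (-a - K * Real.sin (-φ t)) t := by
      intro t ht
      have hd := (hφ t ht).neg
      refine hd.congr_deriv ?_
      rw [Real.sin_neg]; ring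
    have h' : ∀ t ≥ 0, 0 ≤ -a - K * Real.sin (-φ t) := by
      intro t ht
      rw [Real.sin_neg]
      have := h t ht
      linarith
    have hres := convNonneg hK (by rwa [abs_neg]) hφ' h'
    have hres2 : Tendsto (fun t => -(a - K * Real.sin (φ t))) atTop (nhds 0) := by
      refine hres.congr (fun t => ?_)
      rw [Real.sin_neg]; ring
    have := hres2.neg
    simpa using this

private lemma existsSol {a K : ℝ} (hK : 0 < K) (haK : K < a) :
    ∃ φ : ℝ → ℝ, ∀ t, HasDerivAt φ (a - K * Real.sin (φ t)) t := by
  set f : ℝ → ℝ := fun x => a - K * Real.sin x with hfdef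
  have hfpos : ∀ x, 0 < f x := by
    intro x
    have h1 := Real.sin_le_one x
    have h2 := Real.neg_one_le_sin x
    simp only [hfdef]
    nlinarith
  have hfub : ∀ x, f x ≤ a + K := by
    intro x
    have h2 := Real.neg_one_le_sin x
    simp only [hfdef]
    nlinarith
  have hfcont : Continuous f := continuous_const.sub (continuous_const.mul Real.continuous_sin)
  set g : ℝ → ℝ := fun x => (f x)⁻¹ with hgdef
  have hgcont : Continuous g := hfcont.inv₀ (fun x => (hfpos x).ne')
  have hgpos : ∀ x, 0 < g x := fun x => inv_pos.2 (hfpos x)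
  have haKpos : 0 < a + K := by linarith
  have hglb : ∀ x, (a + K)⁻¹ ≤ g x := fun x =>
    inv_anti₀ (hfpos x) (hfub x)
  set T : ℝ → ℝ := fun y => ∫ x in (0:ℝ)..y, g x with hTdef
  have hTd : ∀ y, HasDerivAt T (g y) y := fun y =>
    (hgcont.integral_hasStrictDerivAt 0 y).hasDerivAt
  have hTmono : StrictMono T := strictMono_of_deriv_pos (fun y => by
    rw [(hTd y).deriv]; exact hgpos y)
  have hTcont : Continuous T :=
    (Differentiable.continuous (fun y => (hTd y).differentiableAt))
  have hlow : ∀ y ≥ (0:ℝ), (a + K)⁻¹ * y ≤ T y := by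
    intro y hy
    have hint : ∫ x in (0:ℝ)..y, (a + K)⁻¹ ≤ ∫ x in (0:ℝ)..y, g x :=
      intervalIntegral.integral_mono_on hy
        (intervalIntegrable_const)
        (hgcont.intervalIntegrable 0 y)
        (fun x _ => hglb x)
    rw [intervalIntegral.integral_const, smul_eq_mul, sub_zero] at hint
    rw [mul_comm] at hint
    exact hint
  have hhigh : ∀ y ≤ (0:ℝ), T y ≤ (a + K)⁻¹ * y := by
    intro y hy
    have hint : ∫ x in y..(0:ℝ), (a + K)⁻¹ ≤ ∫ x in y..(0:ℝ), g x :=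
      intervalIntegral.integral_mono_on hy
        (intervalIntegrable_const)
        (hgcont.intervalIntegrable y 0)
        (fun x _ => hglb x)
    rw [intervalIntegral.integral_const, smul_eq_mul] at hint
    have hsymm : T y = -∫ x in y..(0:ℝ), g x := by
      rw [hTdef]; simp only
      rw [intervalIntegral.integral_symm]
    rw [hsymm]
    have : (0 - y) * (a + K)⁻¹ = -((a + K)⁻¹ * y) := by ring
    rw [this] at hint
    linarith
  have hTtop : Tendsto T atTop atTop := by
    apply tendsto_atTop_mono' atTop (f₁ := fun y => (a + K)⁻¹ * y)
    · filter_upwards [eventually_ge_atTop (0:ℝ)] with y hy using hlow y hy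
    · exact Tendsto.const_mul_atTop (inv_pos.2 haKpos) tendsto_id
  have hTbot : Tendsto T atBot atBot := by
    apply tendsto_atBot_mono' atBot (f₁ := fun y => (a + K)⁻¹ * y)
    · filter_upwards [eventually_le_atBot (0:ℝ)] with y hy using hhigh y hy
    · exact Tendsto.const_mul_atBot (inv_pos.2 haKpos) tendsto_id
  have hsurj : Function.Surjective T := hTcont.surjective hTtop hTbot
  set e := StrictMono.orderIsoOfSurjective T hTmono hsurj with hedef
  refine ⟨fun t => e.symm t, fun t => ?_⟩
  have hinv : HasDerivAt (fun u => e.symm u) ((g (e.symm t))⁻¹) t := by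
    apply HasDerivAt.of_local_left_inverse
    · exact (e.symm.continuous).continuousAt
    · exact hTd (e.symm t)
    · exact (hgpos _).ne'
    · filter_upwards with y
      exact StrictMono.orderIsoOfSurjective_self_symm_apply T hTmono hsurj y
  have : (g (e.symm t))⁻¹ = a - K * Real.sin (e.symm t) := by
    simp only [hgdef, hfdef, inv_inv]
  rw [this] at hinv
  exact hinv

theorem stmt10 (K ω₁ ω₂ : ℝ) (hK : 0 < K) :
    (∀ θ₁ θ₂ : ℝ → ℝ,
      (∀ t ≥ 0, HasDerivAt θ₁ (ω₁ + K / 2 * Real.sin (θ₂ t - θ₁ t)) t) →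
      (∀ t ≥ 0, HasDerivAt θ₂ (ω₂ + K / 2 * Real.sin (θ₁ t - θ₂ t)) t) →
      Tendsto (fun t => |(ω₁ + K / 2 * Real.sin (θ₂ t - θ₁ t)) -
        (ω₂ + K / 2 * Real.sin (θ₁ t - θ₂ t))|) atTop (nhds 0))
    ↔ |ω₁ - ω₂| ≤ K := by
  constructor
  · -- if every solution synchronizes, then |ω₁ - ω₂| ≤ K
    intro H
    by_contra hcon
    push_neg at hcon
    set a : ℝ := ω₁ - ω₂ with hadef
    obtain ⟨φ, hφ⟩ : ∃ φ : ℝ → ℝ, ∀ t, HasDerivAt φ (a - K * Real.sin (φ t)) t := by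
      rcases lt_abs.mp hcon with h | h
      · exact existsSol hK h
      · obtain ⟨ψ, hψ⟩ := existsSol hK (a := -a) h
        refine ⟨fun t => -ψ t, fun t => ?_⟩
        have hd := (hψ t).neg
        refine hd.congr_deriv ?_
        rw [Real.sin_neg]; ring
    set θ₁ : ℝ → ℝ := fun t => ((ω₁ + ω₂) * t + φ t) / 2 with hθ₁def
    set θ₂ : ℝ → ℝ := fun t => ((ω₁ + ω₂) * t - φ t) / 2 with hθ₂def
    have key1 : ∀ t, θ₂ t - θ₁ t = -(φ t) := fun t => by
      simp only [hθ₁def, hθ₂def]; ring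
    have key2 : ∀ t, θ₁ t - θ₂ t = φ t := fun t => by
      simp only [hθ₁def, hθ₂def]; ring
    have h1 : ∀ t ≥ 0, HasDerivAt θ₁ (ω₁ + K / 2 * Real.sin (θ₂ t - θ₁ t)) t := by
      intro t _
      have hd : HasDerivAt θ₁ (((ω₁ + ω₂) * 1 + (a - K * Real.sin (φ t))) / 2) t :=
        (((hasDerivAt_id t).const_mul (ω₁ + ω₂)).add (hφ t)).div_const 2
      convert hd using 1
      rw [key1 t, Real.sin_neg, hadef]; ring
    have h2 : ∀ t ≥ 0, HasDerivAt θ₂ (ω₂ + K / 2 * Real.sin (θ₁ t - θ₂ t)) t := by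
      intro t _
      have hd : HasDerivAt θ₂ (((ω₁ + ω₂) * 1 - (a - K * Real.sin (φ t))) / 2) t :=
        (((hasDerivAt_id t).const_mul (ω₁ + ω₂)).sub (hφ t)).div_const 2
      convert hd using 1
      rw [key2 t, hadef]; ring
    have hsync := H θ₁ θ₂ h1 h2
    have heq : (fun t => |(ω₁ + K / 2 * Real.sin (θ₂ t - θ₁ t)) -
        (ω₂ + K / 2 * Real.sin (θ₁ t - θ₂ t))|) = fun t => |a - K * Real.sin (φ t)| := by
      funext t
      rw [key1 t, key2 t, Real.sin_neg, hadef]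
      congr 1; ring
    rw [heq] at hsync
    have hlb : ∀ t : ℝ, |a| - K ≤ |a - K * Real.sin (φ t)| := by
      intro t
      have h3 : |a| - |K * Real.sin (φ t)| ≤ |a - K * Real.sin (φ t)| :=
        abs_sub_abs_le_abs_sub _ _
      have h4 : |K * Real.sin (φ t)| ≤ K := by
        rw [abs_mul, abs_of_pos hK]
        have := Real.abs_sin_le_one (φ t)
        nlinarith
      linarith
    have hev := hsync.eventually (eventually_lt_nhds (show (0:ℝ) < |a| - K by linarith))
    obtain ⟨t, ht⟩ := hev.exists
    have := hlb t
    linarith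
  · -- if |ω₁ - ω₂| ≤ K then every solution synchronizes
    intro h θ₁ θ₂ h1 h2
    set a : ℝ := ω₁ - ω₂ with hadef
    have hφ : ∀ t ≥ 0, HasDerivAt (fun s => θ₁ s - θ₂ s)
        (a - K * Real.sin (θ₁ t - θ₂ t)) t := by
      intro t ht
      have hd := (h1 t ht).sub (h2 t ht)
      refine hd.congr_deriv ?_
      rw [show θ₂ t - θ₁ t = -(θ₁ t - θ₂ t) by ring, Real.sin_neg, hadef]
      ring
    have hconv := mainConv hK h hφ
    have habs : Tendsto (fun t => |a - K * Real.sin (θ₁ t - θ₂ t)|) atTop (nhds 0) := by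
      simpa using hconv.abs
    have heq : (fun t => |(ω₁ + K / 2 * Real.sin (θ₂ t - θ₁ t)) -
        (ω₂ + K / 2 * Real.sin (θ₁ t - θ₂ t))|)
        = fun t => |a - K * Real.sin (θ₁ t - θ₂ t)| := by
      funext t
      rw [show θ₂ t - θ₁ t = -(θ₁ t - θ₂ t) by ring, Real.sin_neg, hadef]
      congr 1; ring
    rw [heq]
    exact habs
end
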